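/- Let κ ≤ 𝔠 be an uncountable cardinal with cf(κ) > ω. Then there exists a family {X_α : α < 𝔠} of 𝔠 many pairwise distinct subsets of the Cantor space 2^ω, each of size κ, such that X_α and X_β are homeomorphic (as subspaces of 2^ω) for all α, β < 𝔠, but for all α ≠ β the Ψ-spaces Ψ(𝒜_{X_α}) and Ψ(𝒜_{X_β}) are not homeomorphic. -/

import Mathlib

open Set Cardinal

/-- x̂ = {x↾k : k ∈ ω}: the set of finite initial segments of x ∈ 2^ω,
as a subset of 2^{<ω} (represented by `List Bool`). -/
def hatSet (x : ℕ → Bool) : Set (List Bool) :=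
  {l | ∀ i : Fin l.length, l.get i = x i}

/-- 𝒜_X = {x̂ : x ∈ X}: the branch family of X ⊆ 2^ω. -/
def branchFamily (X : Set (ℕ → Bool)) : Set (Set (List Bool)) :=
  hatSet '' X

/-- The Ψ-space topology on ι ⊕ 𝒜 for an AD family 𝒜 on a countable set ι. -/
def psiTop {ι : Type} (𝒜 : Set (Set ι)) : TopologicalSpace (ι ⊕ ↥𝒜) :=
  TopologicalSpace.generateFrom
    ({U | ∃ n : ι, U = {Sum.inl n}} ∪
     {U | ∃ (A : ↥𝒜) (F : Finset ι),
        U = insert (Sum.inr A) (Sum.inl '' ((A : Set ι) \ ↑F))})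

namespace PsiAux

open Topology



/-- prefix of length k -/
def pre (x : ℕ → Bool) (k : ℕ) : List Bool := List.ofFn (fun i : Fin k => x i)

@[simp] lemma pre_length (x k) : (pre x k).length = k := by simp [pre]

lemma pre_inj (x : ℕ → Bool) : Function.Injective (pre x) := by
  intro a b h
  have := congrArg List.length h
  simpa using this

lemma mem_hatSet_iff {x : ℕ → Bool} {l : List Bool} :
    l ∈ hatSet x ↔ l = pre x l.length := by
  constructor
  · intro h
    apply List.ext_get (by simp)
    intro i h1 h2
    have := h ⟨i, h1⟩
    simp only [List.get_eq_getElem] at this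
    simp [pre, this]
  · intro h
    intro i
    rw [List.get_of_eq h]
    simp [pre]

lemma pre_mem_hatSet (x : ℕ → Bool) (k : ℕ) : pre x k ∈ hatSet x := by
  rw [mem_hatSet_iff]; simp

lemma hatSet_eq_range (x : ℕ → Bool) : hatSet x = Set.range (pre x) := by
  ext l
  constructor
  · intro h; exact ⟨l.length, (mem_hatSet_iff.1 h).symm⟩
  · rintro ⟨k, rfl⟩; exact pre_mem_hatSet x k

lemma hatSet_infinite (x : ℕ → Bool) : (hatSet x).Infinite := by
  rw [hatSet_eq_range]
  exact Set.infinite_range_of_injective (pre_inj x)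

/-- split point -/
noncomputable def spl (x x' : ℕ → Bool) : ℕ := sInf {i | x i ≠ x' i}

lemma spl_mem {x x' : ℕ → Bool} (h : x ≠ x') : x (spl x x') ≠ x' (spl x x') := by
  have : {i | x i ≠ x' i}.Nonempty := by
    obtain ⟨i, hi⟩ := Function.ne_iff.1 h
    exact ⟨i, hi⟩
  exact Nat.sInf_mem this

lemma spl_min {x x' : ℕ → Bool} {i : ℕ} (h : i < spl x x') : x i = x' i := by
  by_contra hne
  have := Nat.sInf_le (show i ∈ {i | x i ≠ x' i} from hne)
  unfold spl at h
  omega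

lemma pre_eq_of_le_spl {x x' : ℕ → Bool} {k : ℕ} (h : k ≤ spl x x') :
    pre x k = pre x' k := by
  apply List.ext_get (by simp)
  intro i h1 h2
  simp only [pre, List.get_ofFn]
  simp only [pre_length] at h1
  exact spl_min (by omega)

lemma inter_hatSet_eq {x x' : ℕ → Bool} (h : x ≠ x') :
    hatSet x ∩ hatSet x' = pre x '' Set.Iic (spl x x') := by
  ext l
  constructor
  · rintro ⟨h1, h2⟩
    have e1 := mem_hatSet_iff.1 h1
    have e2 := mem_hatSet_iff.1 h2
    refine ⟨l.length, ?_, e1.symm⟩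
    simp only [Set.mem_Iic]
    by_contra hc
    push_neg at hc
    have hd : spl x x' < l.length := hc
    have : x (spl x x') = x' (spl x x') := by
      have g1 := h1 ⟨spl x x', hd⟩
      have g2 := h2 ⟨spl x x', hd⟩
      rw [← g1, ← g2]
    exact spl_mem h this
  · rintro ⟨k, hk, rfl⟩
    simp only [Set.mem_Iic] at hk
    refine ⟨pre_mem_hatSet x k, ?_⟩
    rw [pre_eq_of_le_spl hk]
    exact pre_mem_hatSet x' k

lemma ncard_inter_hatSet {x x' : ℕ → Bool} (h : x ≠ x') :
    (hatSet x ∩ hatSet x').ncard = spl x x' + 1 := by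
  rw [inter_hatSet_eq h,
    Set.ncard_image_of_injective _ (pre_inj x)]
  rw [← Finset.coe_Iic, Set.ncard_coe_finset]
  simp

lemma inter_hatSet_finite {x x' : ℕ → Bool} (h : x ≠ x') :
    (hatSet x ∩ hatSet x').Finite := by
  rw [inter_hatSet_eq h]
  exact (Set.finite_Iic _).image _

lemma hatSet_injective : Function.Injective hatSet := by
  intro x x' h
  by_contra hne
  have h1 : pre x (spl x x' + 1) ∈ hatSet x := pre_mem_hatSet _ _
  rw [h] at h1
  have := mem_hatSet_iff.1 h1
  simp only [pre_length] at this
  have hd : spl x x' < (pre x (spl x x' + 1)).length := by simp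
  have g1 := (pre_mem_hatSet x (spl x x' + 1)) ⟨spl x x', by simp⟩
  have g2 := h1 ⟨spl x x', hd⟩
  rw [g1] at g2
  exact spl_mem hne g2



def bitf (w : ℕ → Bool) (i : ℕ) : ℕ := if w ((Nat.unpair i).1) then 2 ^ i else 0

def valf (w : ℕ → Bool) (n : ℕ) : ℕ := ∑ i ∈ Finset.range n, bitf w i

def lev (w : ℕ → Bool) (n : ℕ) : ℕ := 4 ^ (n + 2) + 2 ^ n + valf w n

lemma bitf_le (w i) : bitf w i ≤ 2 ^ i := by
  unfold bitf; split <;> simp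

lemma bitf_cases (w i) : bitf w i = 2 ^ i ∨ bitf w i = 0 := by
  unfold bitf; split <;> simp

lemma sum_pow_two_lt (n : ℕ) : ∑ i ∈ Finset.range n, 2 ^ i < 2 ^ n := by
  induction n with
  | zero => simp
  | succ n ih =>
    rw [Finset.sum_range_succ, pow_succ]
    omega

lemma valf_lt (w n) : valf w n < 2 ^ n := by
  calc valf w n ≤ ∑ i ∈ Finset.range n, 2 ^ i :=
        Finset.sum_le_sum fun i _ => bitf_le w i
    _ < 2 ^ n := sum_pow_two_lt n

lemma two_pow_le_four_pow (n : ℕ) : 2 ^ n ≤ 4 ^ n :=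
  Nat.pow_le_pow_left (by norm_num) n

lemma lev_lt (w n) : lev w n < 2 * 4 ^ (n + 2) := by
  have h1 := valf_lt w n
  have h2 : 2 ^ n + 2 ^ n ≤ 2 ^ (n + 2) := by
    rw [pow_succ, pow_succ]; omega
  have h3 : (2:ℕ) ^ (n+2) ≤ 4 ^ (n+2) := two_pow_le_four_pow _
  unfold lev
  linarith

lemma lev_ge (w n) : 4 ^ (n + 2) ≤ lev w n := by
  unfold lev
  linarith [Nat.zero_le (2 ^ n), Nat.zero_le (valf w n)]

lemma lev_strictMono (w) : StrictMono (lev w) := by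
  apply strictMono_nat_of_lt_succ
  intro n
  have h1 := lev_lt w n
  have h2 := lev_ge w (n + 1)
  have e : (4:ℕ) ^ (n + 1 + 2) = 4 * 4 ^ (n + 2) := by ring
  linarith

lemma lev_injective (w) : Function.Injective (lev w) := (lev_strictMono w).injective

/-- binary uniqueness on intervals -/
lemma bits_eq_on_Ico (w w' : ℕ → Bool) :
    ∀ (n' n : ℕ), (∑ i ∈ Finset.Ico n n', bitf w i) = (∑ i ∈ Finset.Ico n n', bitf w' i) →
      ∀ i, n ≤ i → i < n' → bitf w i = bitf w' i := by
  intro n'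
  induction n' with
  | zero => intro n _ i _ h2; omega
  | succ n' ih =>
    intro n hsum i h1 h2
    by_cases hn : n ≤ n'
    · rw [Finset.sum_Ico_succ_top hn, Finset.sum_Ico_succ_top hn] at hsum
      have hb : ∀ v : ℕ → Bool, ∑ j ∈ Finset.Ico n n', bitf v j < 2 ^ n' := by
        intro v
        calc ∑ j ∈ Finset.Ico n n', bitf v j ≤ ∑ j ∈ Finset.Ico n n', 2 ^ j :=
              Finset.sum_le_sum fun j _ => bitf_le v j
          _ ≤ ∑ j ∈ Finset.range n', 2 ^ j := by
              apply Finset.sum_le_sum_of_subset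
              intro j hj
              simp only [Finset.mem_Ico] at hj
              simp [hj.2]
          _ < 2 ^ n' := sum_pow_two_lt n'
      have htop : bitf w n' = bitf w' n' := by
        have hw := hb w
        have hw' := hb w'
        rcases bitf_cases w n' with hw1 | hw1 <;> rcases bitf_cases w' n' with hw2 | hw2 <;>
          rw [hw1, hw2] at hsum ⊢ <;> omega
      rcases Nat.lt_or_ge i n' with hi | hi
      · rw [htop] at hsum
        exact ih n (by omega) i h1 hi
      · have : i = n' := by omega
        rw [this]; exact htop
    · omega

/-- key finiteness lemma -/
lemma key_finite {w w' : ℕ → Bool} (hww : w ≠ w') (a b : ℕ) :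
    {n : ℕ | ∃ m, lev w n + a = lev w' m + b}.Finite := by
  by_contra hinf
  replace hinf : {n : ℕ | ∃ m, lev w n + a = lev w' m + b}.Infinite := hinf
  obtain ⟨N, hN⟩ : ∃ N, 2 * (a + b) < 4 ^ (N + 2) := by
    refine ⟨a + b, ?_⟩
    have h1 : a + b < 2 ^ (a + b) := Nat.lt_two_pow_self
    have h2 : (2:ℕ) ^ (a + b + 1) ≤ 2 ^ (a + b + 2) := Nat.pow_le_pow_right (by norm_num) (by omega)
    have h3 : (2:ℕ) ^ (a + b + 2) ≤ 4 ^ (a + b + 2) := two_pow_le_four_pow _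
    have h4 : (2:ℕ) ^ (a + b + 1) = 2 * 2 ^ (a + b) := by rw [pow_succ]; ring
    omega
  have hdiag : ∀ n ∈ {n : ℕ | ∃ m, lev w n + a = lev w' m + b}, N ≤ n →
      valf w n + a = valf w' n + b := by
    rintro n ⟨m, hm⟩ hNn
    have hNle : 4 ^ (N + 2) ≤ 4 ^ (n + 2) := Nat.pow_le_pow_right (by norm_num) (by omega)
    have hmn : m = n := by
      rcases Nat.lt_trichotomy m n with h | h | h
      · exfalso
        have h1 := lev_lt w' m
        have h2 := lev_ge w n
        have h3 : 4 * 4 ^ (m + 2) ≤ 4 ^ (n + 2) := by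
          calc 4 * 4 ^ (m + 2) = 4 ^ (m + 3) := by rw [pow_succ]; ring
            _ ≤ 4 ^ (n + 2) := Nat.pow_le_pow_right (by norm_num) (by omega)
        linarith
      · exact h
      · exfalso
        have h1 := lev_lt w n
        have h2 := lev_ge w' m
        have h3 : 4 * 4 ^ (n + 2) ≤ 4 ^ (m + 2) := by
          calc 4 * 4 ^ (n + 2) = 4 ^ (n + 3) := by rw [pow_succ]; ring
            _ ≤ 4 ^ (m + 2) := Nat.pow_le_pow_right (by norm_num) (by omega)
        linarith
    rw [hmn] at hm
    unfold lev at hm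
    have hx : valf w n + a + (4 ^ (n+2) + 2^n) = valf w' n + b + (4 ^ (n+2) + 2^n) := by
      linarith
    exact Nat.add_right_cancel hx
  obtain ⟨n₀, hn₀I, hn₀N'⟩ := hinf.exists_gt N
  have hn₀N : N ≤ n₀ := le_of_lt hn₀N'
  have hbits : ∀ i, n₀ ≤ i → bitf w i = bitf w' i := by
    intro i hi
    obtain ⟨n', hn', hgt⟩ := hinf.exists_gt i
    have e1 := hdiag n₀ hn₀I hn₀N
    have e2 := hdiag n' hn' (by omega)
    have hsum : (∑ j ∈ Finset.Ico n₀ n', bitf w j) = ∑ j ∈ Finset.Ico n₀ n', bitf w' j := by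
      have d1 : valf w n₀ + (∑ j ∈ Finset.Ico n₀ n', bitf w j) = valf w n' := by
        unfold valf
        rw [← Finset.sum_range_add_sum_Ico _ (by omega : n₀ ≤ n')]
      have d2 : valf w' n₀ + (∑ j ∈ Finset.Ico n₀ n', bitf w' j) = valf w' n' := by
        unfold valf
        rw [← Finset.sum_range_add_sum_Ico _ (by omega : n₀ ≤ n')]
      omega
    exact bits_eq_on_Ico w w' n' n₀ hsum i hi hgt
  obtain ⟨j, hj⟩ := Function.ne_iff.1 hww
  have hpair : n₀ ≤ Nat.pair j n₀ := Nat.right_le_pair j n₀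
  have hb := hbits (Nat.pair j n₀) hpair
  unfold bitf at hb
  rw [Nat.unpair_pair] at hb
  have hpow : (0:ℕ) < 2 ^ (Nat.pair j n₀) := by positivity
  rcases Bool.eq_false_or_eq_true (w j) with h | h <;>
    rcases Bool.eq_false_or_eq_true (w' j) with h' | h' <;>
      simp [h, h'] at hb hj <;> omega




noncomputable def emb (w : ℕ → Bool) (z : ℕ → Bool) : ℕ → Bool :=
  Function.extend (lev w) z (fun _ => false)

lemma emb_apply_lev (w z n) : emb w z (lev w n) = z n :=
  Function.Injective.extend_apply (lev_strictMono w).injective _ _ _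

lemma emb_apply_not_mem {w : ℕ → Bool} {m : ℕ} (h : ¬ ∃ n, lev w n = m) (z) :
    emb w z m = false :=
  Function.extend_apply' _ _ _ h

lemma emb_injective (w) : Function.Injective (emb w) := by
  intro z z' h
  funext n
  have := congrFun h (lev w n)
  rwa [emb_apply_lev, emb_apply_lev] at this

lemma emb_continuous (w) : Continuous (emb w) := by
  apply continuous_pi
  intro m
  by_cases h : ∃ n, lev w n = m
  · obtain ⟨n, rfl⟩ := h
    have : (fun z => emb w z (lev w n)) = fun z : ℕ → Bool => z n := by
      funext z; exact emb_apply_lev w z n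
    rw [this]
    exact continuous_apply n
  · have : (fun z => emb w z m) = fun _ : ℕ → Bool => false := by
      funext z; exact emb_apply_not_mem h z
    rw [this]
    exact continuous_const

lemma spl_emb {w z z' : ℕ → Bool} (h : z ≠ z') :
    spl (emb w z) (emb w z') = lev w (spl z z') := by
  have hne : emb w z ≠ emb w z' := fun hc => h (emb_injective w hc)
  apply le_antisymm
  · exact Nat.sInf_le (by
      show emb w z (lev w (spl z z')) ≠ emb w z' (lev w (spl z z'))
      rw [emb_apply_lev, emb_apply_lev]
      exact spl_mem h)
  · apply le_csInf
    · obtain ⟨i, hi⟩ := Function.ne_iff.1 hne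
      exact ⟨i, hi⟩
    · intro i hi
      by_contra hc
      push_neg at hc
      apply hi
      show emb w z i = emb w z' i
      by_cases hr : ∃ n, lev w n = i
      · obtain ⟨n, rfl⟩ := hr
        rw [emb_apply_lev, emb_apply_lev]
        have : n < spl z z' := by
          have := (lev_strictMono w).lt_iff_lt.mp hc
          exact this
        exact spl_min this
      · rw [emb_apply_not_mem hr, emb_apply_not_mem hr]

/-- a set with bounded pairwise splits is finite -/
lemma finite_of_bounded_splits {S : Set (ℕ → Bool)} {N : ℕ}
    (h : ∀ x ∈ S, ∀ x' ∈ S, x ≠ x' → spl x x' ≤ N) : S.Finite := by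
  have hinj : Set.InjOn (fun x : ℕ → Bool => (fun i : Fin (N + 1) => x i)) S := by
    intro x hx x' hx' he
    by_contra hne
    have hsp := h x hx x' hx' hne
    have := congrFun he ⟨spl x x', by omega⟩
    exact spl_mem hne this
  have : ((fun x : ℕ → Bool => (fun i : Fin (N + 1) => x i)) '' S).Finite := Set.toFinite _
  exact Set.Finite.of_finite_image this hinj

lemma infinite_splitvals {S : Set (ℕ → Bool)} (h : S.Infinite) :
    {s : ℕ | ∃ x ∈ S, ∃ x' ∈ S, x ≠ x' ∧ s = spl x x'}.Infinite := by
  by_contra hfin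
  rw [Set.not_infinite] at hfin
  obtain ⟨N, hN⟩ : ∃ N, ∀ s ∈ {s : ℕ | ∃ x ∈ S, ∃ x' ∈ S, x ≠ x' ∧ s = spl x x'}, s ≤ N := by
    rcases hfin.bddAbove with ⟨N, hN⟩
    exact ⟨N, fun s hs => hN hs⟩
  exact h (finite_of_bounded_splits (fun x hx x' hx' hne =>
    hN _ ⟨x, hx, x', hx', hne, rfl⟩))



variable {e : (ℕ → Bool) → (ℕ → Bool)}

/-- subspace homeo induced by a continuous injection from a compact space -/
noncomputable def imageHomeo (hc : Continuous e) (hi : Function.Injective e)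
    (X : Set (ℕ → Bool)) : ↥X ≃ₜ ↥(e '' X) := by
  have hemb : IsEmbedding e := (hc.isClosedEmbedding hi).isEmbedding
  have hemb2 : IsEmbedding (fun u : ↥X => e u.val) := hemb.comp IsEmbedding.subtypeVal
  have h1 : ↥X ≃ₜ ↥(Set.range fun u : ↥X => e u.val) := hemb2.toHomeomorph
  have h2 : (Set.range fun u : ↥X => e u.val) = e '' X := by
    ext y
    constructor
    · rintro ⟨u, hu⟩; exact ⟨u.val, u.2, hu⟩
    · rintro ⟨x, hx, rfl⟩; exact ⟨⟨x, hx⟩, rfl⟩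
  exact h1.trans (Homeomorph.setCongr h2)

lemma mk_nat_bool : Cardinal.mk (ℕ → Bool) = Cardinal.continuum := by
  rw [← Cardinal.two_power_aleph0]
  have := Cardinal.mk_arrow ℕ Bool
  simp only [Cardinal.mk_bool, Cardinal.mk_nat, Cardinal.lift_id] at this
  rw [this]



variable {ι : Type}

def gens (𝒜 : Set (Set ι)) : Set (Set (ι ⊕ ↥𝒜)) :=
  {U | ∃ n : ι, U = {Sum.inl n}} ∪
  {U | ∃ (A : ↥𝒜) (F : Finset ι),
      U = insert (Sum.inr A) (Sum.inl '' ((A : Set ι) \ ↑F))}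

lemma psiTop_eq (𝒜 : Set (Set ι)) : psiTop 𝒜 = TopologicalSpace.generateFrom (gens 𝒜) := rfl

section
variable (𝒜 : Set (Set ι))

lemma isOpen_inl_singleton (n : ι) : IsOpen[psiTop 𝒜] {Sum.inl n} := by
  rw [psiTop_eq]
  exact TopologicalSpace.isOpen_generateFrom_of_mem (Or.inl ⟨n, rfl⟩)

lemma isOpen_basic_nbhd (A : ↥𝒜) (F : Finset ι) :
    IsOpen[psiTop 𝒜] (insert (Sum.inr A) (Sum.inl '' ((A : Set ι) \ ↑F))) := by
  rw [psiTop_eq]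
  exact TopologicalSpace.isOpen_generateFrom_of_mem (Or.inr ⟨A, F, rfl⟩)

lemma nhds_basic (A : ↥𝒜) (U : Set (ι ⊕ ↥𝒜)) (hU : IsOpen[psiTop 𝒜] U)
    (hA : Sum.inr A ∈ U) :
    ∃ F : Finset ι, insert (Sum.inr A) (Sum.inl '' ((A : Set ι) \ ↑F)) ⊆ U := by
  letI : TopologicalSpace (ι ⊕ ↥𝒜) := psiTop 𝒜
  have basis := TopologicalSpace.isTopologicalBasis_of_subbasis (psiTop_eq 𝒜)
  obtain ⟨v, hv, hmem, hsub⟩ := basis.isOpen_iff.mp hU _ hA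
  obtain ⟨t, ⟨htf, hts⟩, rfl⟩ := hv
  have hFu : ∀ u ∈ t, ∃ F : Finset ι,
      u = insert (Sum.inr A) (Sum.inl '' ((A : Set ι) \ ↑F)) := by
    intro u hu
    have hmemu : Sum.inr A ∈ u := (Set.mem_sInter.1 hmem) u hu
    rcases hts hu with ⟨n, rfl⟩ | ⟨A', F, rfl⟩
    · simp at hmemu
    · rcases Set.mem_insert_iff.1 hmemu with heq | hbad
      · have : A' = A := by
          have := Sum.inr.inj heq
          exact this.symm
        subst this
        exact ⟨F, rfl⟩
      · exfalso
        rcases hbad with ⟨a, _, hbad2⟩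
        simp at hbad2
  choose! Ffun hFfun using hFu
  have hSfin : (⋃ u ∈ t, (↑(Ffun u) : Set ι)).Finite :=
    htf.biUnion fun u _ => (Ffun u).finite_toSet
  refine ⟨hSfin.toFinset, subset_trans ?_ hsub⟩
  intro p hp
  rw [Set.mem_sInter]
  intro u hu
  rw [hFfun u hu]
  rcases Set.mem_insert_iff.1 hp with rfl | ⟨a, ha, rfl⟩
  · exact Set.mem_insert _ _
  · apply Set.mem_insert_of_mem
    refine ⟨a, ⟨ha.1, fun hmemF => ha.2 ?_⟩, rfl⟩
    exact Finset.mem_coe.2 ((Set.Finite.mem_toFinset _).2 (Set.mem_biUnion hu hmemF))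

lemma not_isOpen_inr (A : ↥𝒜) (hinf : (A : Set ι).Infinite) :
    ¬ IsOpen[psiTop 𝒜] {Sum.inr A} := by
  intro h
  obtain ⟨F, hF⟩ := nhds_basic 𝒜 A {Sum.inr A} h (Set.mem_singleton _)
  obtain ⟨a, ha⟩ := (hinf.diff F.finite_toSet).nonempty
  have := hF (Set.mem_insert_of_mem _ (Set.mem_image_of_mem _ ha))
  simp at this

end

section Extract

variable {𝒜 ℬ : Set (Set ι)}

lemma homeo_inl_to_inl (hℬ : ∀ B ∈ ℬ, B.Infinite)
    (h : @Homeomorph (ι ⊕ ↥𝒜) (ι ⊕ ↥ℬ) (psiTop 𝒜) (psiTop ℬ)) (n : ι) :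
    ∃ m : ι, h (Sum.inl n) = Sum.inl m := by
  letI : TopologicalSpace (ι ⊕ ↥𝒜) := psiTop 𝒜
  letI : TopologicalSpace (ι ⊕ ↥ℬ) := psiTop ℬ
  cases hp : h (Sum.inl n) with
  | inl m => exact ⟨m, rfl⟩
  | inr B =>
    exfalso
    have hopen : IsOpen (h '' {Sum.inl n}) :=
      (Homeomorph.isOpen_image h).mpr (isOpen_inl_singleton 𝒜 n)
    rw [Set.image_singleton, hp] at hopen
    exact not_isOpen_inr ℬ B (hℬ B.val B.2) hopen

lemma homeo_inr_to_inr (h𝒜 : ∀ A ∈ 𝒜, A.Infinite)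
    (h : @Homeomorph (ι ⊕ ↥𝒜) (ι ⊕ ↥ℬ) (psiTop 𝒜) (psiTop ℬ)) (A : ↥𝒜) :
    ∃ B : ↥ℬ, h (Sum.inr A) = Sum.inr B := by
  letI : TopologicalSpace (ι ⊕ ↥𝒜) := psiTop 𝒜
  letI : TopologicalSpace (ι ⊕ ↥ℬ) := psiTop ℬ
  cases hp : h (Sum.inr A) with
  | inl m =>
    exfalso
    obtain ⟨n, hn⟩ := homeo_inl_to_inl h𝒜 h.symm m
    have : h.symm (h (Sum.inr A)) = Sum.inl n := by rw [hp, hn]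
    rw [Homeomorph.symm_apply_apply] at this
    simp at this
  | inr B => exact ⟨B, rfl⟩

/-- one-sided error estimate -/
lemma homeo_error (hℬ : ∀ B ∈ ℬ, B.Infinite)
    (h : @Homeomorph (ι ⊕ ↥𝒜) (ι ⊕ ↥ℬ) (psiTop 𝒜) (psiTop ℬ))
    (f : ι → ι) (hf : ∀ n, h (Sum.inl n) = Sum.inl (f n))
    (G : ↥𝒜 → ↥ℬ) (hG : ∀ A, h (Sum.inr A) = Sum.inr (G A)) (A : ↥𝒜) :
    (f '' (A : Set ι) \ (G A : Set ι)).Finite := by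
  letI : TopologicalSpace (ι ⊕ ↥𝒜) := psiTop 𝒜
  letI : TopologicalSpace (ι ⊕ ↥ℬ) := psiTop ℬ
  set B := G A with hB
  have hV : IsOpen (insert (Sum.inr B) (Sum.inl '' ((B : Set ι) \ ↑(∅ : Finset ι)))) :=
    isOpen_basic_nbhd ℬ B ∅
  have hU : IsOpen (h ⁻¹' (insert (Sum.inr B) (Sum.inl '' ((B : Set ι) \ ↑(∅ : Finset ι))))) :=
    hV.preimage h.continuous
  have hAU : Sum.inr A ∈ h ⁻¹' (insert (Sum.inr B) (Sum.inl '' ((B : Set ι) \ ↑(∅ : Finset ι)))) := by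
    simp only [Set.mem_preimage, hG A, ← hB]
    exact Set.mem_insert _ _
  obtain ⟨F, hFsub⟩ := nhds_basic 𝒜 A _ hU hAU
  have hsubset : f '' (A : Set ι) \ (B : Set ι) ⊆ f '' ((A : Set ι) ∩ ↑F) := by
    rintro p ⟨⟨a, ha, rfl⟩, hnb⟩
    refine ⟨a, ⟨ha, ?_⟩, rfl⟩
    by_contra hnF
    have hin : Sum.inl a ∈ insert (Sum.inr A) (Sum.inl '' ((A : Set ι) \ ↑F)) :=
      Set.mem_insert_of_mem _ (Set.mem_image_of_mem _ ⟨ha, hnF⟩)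
    have hmem := hFsub hin
    rw [Set.mem_preimage, hf a] at hmem
    rcases Set.mem_insert_iff.1 hmem with heq | ⟨b, hb, hbeq⟩
    · simp at heq
    · have : b = f a := Sum.inl.inj hbeq
      subst this
      exact hnb (by simpa using hb.1)
  exact ((F.finite_toSet.inter_of_right _).image f).subset hsubset

/-- full extraction -/
lemma homeo_extract (h𝒜 : ∀ A ∈ 𝒜, A.Infinite) (hℬ : ∀ B ∈ ℬ, B.Infinite)
    (h : @Homeomorph (ι ⊕ ↥𝒜) (ι ⊕ ↥ℬ) (psiTop 𝒜) (psiTop ℬ)) :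
    ∃ f : ι → ι, Function.Injective f ∧
    ∃ G : ↥𝒜 → ↥ℬ, Function.Injective G ∧
    ∀ A : ↥𝒜, (f '' (A : Set ι) \ (G A : Set ι)).Finite ∧
      ((G A : Set ι) \ f '' (A : Set ι)).Finite := by
  letI : TopologicalSpace (ι ⊕ ↥𝒜) := psiTop 𝒜
  letI : TopologicalSpace (ι ⊕ ↥ℬ) := psiTop ℬ
  choose f hf using homeo_inl_to_inl hℬ h
  choose G hG using homeo_inr_to_inr h𝒜 h
  choose f' hf' using homeo_inl_to_inl h𝒜 h.symm
  choose G' hG' using homeo_inr_to_inr hℬ h.symm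
  have hff' : ∀ m, f (f' m) = m := by
    intro m
    have : h (h.symm (Sum.inl m)) = Sum.inl (f (f' m)) := by
      rw [hf' m, hf (f' m)]
    rw [Homeomorph.apply_symm_apply] at this
    exact (Sum.inl.inj this).symm
  have hGG' : ∀ A, G' (G A) = A := by
    intro A
    have : h.symm (h (Sum.inr A)) = Sum.inr (G' (G A)) := by
      rw [hG A, hG' (G A)]
    rw [Homeomorph.symm_apply_apply] at this
    exact (Sum.inr.inj this).symm
  refine ⟨f, ?_, G, ?_, ?_⟩
  · intro a b hab
    have : h (Sum.inl a) = h (Sum.inl b) := by rw [hf a, hf b, hab]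
    exact Sum.inl.inj (h.injective this)
  · intro A A' hAA
    have : h (Sum.inr A) = h (Sum.inr A') := by rw [hG A, hG A', hAA]
    exact Sum.inr.inj (h.injective this)
  · intro A
    constructor
    · exact homeo_error hℬ h f hf G hG A
    · have herr := homeo_error h𝒜 h.symm f' hf' G' hG' (G A)
      rw [hGG' A] at herr
      have hsub : (G A : Set ι) \ f '' (A : Set ι) ⊆ f '' (f' '' (G A : Set ι) \ (A : Set ι)) := by
        intro b hb
        have hb1 : b = f (f' b) := (hff' b).symm
        have hf'b : f' b ∉ (A : Set ι) := by
          intro hc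
          exact hb.2 ⟨f' b, hc, (hff' b)⟩
        exact ⟨f' b, ⟨Set.mem_image_of_mem _ hb.1, hf'b⟩, (hff' b)⟩
      exact (herr.image f).subset hsub
end Extract



lemma spl_close {f : List Bool → List Bool} (hf : Function.Injective f)
    {x x' y y' : ℕ → Bool} (hx : x ≠ x') (hy : y ≠ y') {n : ℕ}
    (h1 : (f '' hatSet x \ hatSet y).Finite)
    (h1c : (f '' hatSet x \ hatSet y).ncard ≤ n)
    (h2 : (hatSet y \ f '' hatSet x).Finite)
    (h2c : (hatSet y \ f '' hatSet x).ncard ≤ n)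
    (h1' : (f '' hatSet x' \ hatSet y').Finite)
    (h1c' : (f '' hatSet x' \ hatSet y').ncard ≤ n)
    (h2' : (hatSet y' \ f '' hatSet x').Finite)
    (h2c' : (hatSet y' \ f '' hatSet x').ncard ≤ n) :
    spl x x' ≤ spl y y' + 2 * n ∧ spl y y' ≤ spl x x' + 2 * n := by
  have hxf := inter_hatSet_finite hx
  have hyf := inter_hatSet_finite hy
  have himg : (f '' (hatSet x ∩ hatSet x')).ncard = spl x x' + 1 := by
    rw [Set.ncard_image_of_injective _ hf, ncard_inter_hatSet hx]
  constructor
  · have hsub : f '' (hatSet x ∩ hatSet x') ⊆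
        (hatSet y ∩ hatSet y') ∪ ((f '' hatSet x \ hatSet y) ∪ (f '' hatSet x' \ hatSet y')) := by
      rintro w ⟨u, hu, rfl⟩
      by_cases hwy : f u ∈ hatSet y
      · by_cases hwy' : f u ∈ hatSet y'
        · exact Or.inl ⟨hwy, hwy'⟩
        · exact Or.inr (Or.inr ⟨Set.mem_image_of_mem f hu.2, hwy'⟩)
      · exact Or.inr (Or.inl ⟨Set.mem_image_of_mem f hu.1, hwy⟩)
    have hle : spl x x' + 1 ≤ (spl y y' + 1) + (n + n) := by
      calc spl x x' + 1 = (f '' (hatSet x ∩ hatSet x')).ncard := himg.symm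
        _ ≤ ((hatSet y ∩ hatSet y') ∪
              ((f '' hatSet x \ hatSet y) ∪ (f '' hatSet x' \ hatSet y'))).ncard :=
            Set.ncard_le_ncard hsub (hyf.union (h1.union h1'))
        _ ≤ (hatSet y ∩ hatSet y').ncard +
              ((f '' hatSet x \ hatSet y) ∪ (f '' hatSet x' \ hatSet y')).ncard :=
            Set.ncard_union_le _ _
        _ ≤ (hatSet y ∩ hatSet y').ncard +
              ((f '' hatSet x \ hatSet y).ncard + (f '' hatSet x' \ hatSet y').ncard) := by
            have := Set.ncard_union_le (f '' hatSet x \ hatSet y) (f '' hatSet x' \ hatSet y')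
            omega
        _ ≤ (spl y y' + 1) + (n + n) := by
            rw [ncard_inter_hatSet hy]
            omega
    omega
  · have hsub : hatSet y ∩ hatSet y' ⊆
        f '' (hatSet x ∩ hatSet x') ∪ ((hatSet y \ f '' hatSet x) ∪ (hatSet y' \ f '' hatSet x')) := by
      rintro w ⟨hw, hw'⟩
      by_cases h1m : w ∈ f '' hatSet x
      · by_cases h2m : w ∈ f '' hatSet x'
        · obtain ⟨u, hu, rfl⟩ := h1m
          obtain ⟨u', hu', he⟩ := h2m
          have : u' = u := hf he
          subst this
          exact Or.inl ⟨u', ⟨hu, hu'⟩, rfl⟩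
        · exact Or.inr (Or.inr ⟨hw', h2m⟩)
      · exact Or.inr (Or.inl ⟨hw, h1m⟩)
    have hle : spl y y' + 1 ≤ (spl x x' + 1) + (n + n) := by
      calc spl y y' + 1 = (hatSet y ∩ hatSet y').ncard := (ncard_inter_hatSet hy).symm
        _ ≤ (f '' (hatSet x ∩ hatSet x') ∪
              ((hatSet y \ f '' hatSet x) ∪ (hatSet y' \ f '' hatSet x'))).ncard :=
            Set.ncard_le_ncard hsub ((hxf.image f).union (h2.union h2'))
        _ ≤ (f '' (hatSet x ∩ hatSet x')).ncard +
              ((hatSet y \ f '' hatSet x) ∪ (hatSet y' \ f '' hatSet x')).ncard :=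
            Set.ncard_union_le _ _
        _ ≤ (f '' (hatSet x ∩ hatSet x')).ncard +
              ((hatSet y \ f '' hatSet x).ncard + (hatSet y' \ f '' hatSet x').ncard) := by
            have := Set.ncard_union_le (hatSet y \ f '' hatSet x) (hatSet y' \ f '' hatSet x')
            omega
        _ ≤ (spl x x' + 1) + (n + n) := by
            rw [himg]
            omega
    omega

lemma spl_in_range {X0 : Set (ℕ → Bool)} (w : ℕ → Bool) {x x' : ℕ → Bool}
    (hx : x ∈ emb w '' X0) (hx' : x' ∈ emb w '' X0) (hne : x ≠ x') :
    ∃ j, spl x x' = lev w j := by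
  obtain ⟨u, hu, rfl⟩ := hx
  obtain ⟨u', hu', rfl⟩ := hx'
  have huu : u ≠ u' := fun hc => hne (by rw [hc])
  exact ⟨spl u u', spl_emb huu⟩

lemma not_countable_image {X0 : Set (ℕ → Bool)} (hunc : ¬ X0.Countable) (w : ℕ → Bool) :
    ¬ (emb w '' X0).Countable := by
  intro hc
  exact hunc ((hc.preimage (emb_injective w)).mono (Set.subset_preimage_image _ _))

/-- The core non-homeomorphism result. -/
lemma psi_not_homeo {X0 : Set (ℕ → Bool)} (hunc : ¬ X0.Countable)
    {w w' : ℕ → Bool} (hne : w ≠ w') :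
    ¬ Nonempty (@Homeomorph ((List Bool) ⊕ ↥(branchFamily (emb w '' X0)))
        ((List Bool) ⊕ ↥(branchFamily (emb w' '' X0)))
        (psiTop (branchFamily (emb w '' X0))) (psiTop (branchFamily (emb w' '' X0)))) := by
  rintro ⟨h⟩
  set X := emb w '' X0 with hX
  set Y := emb w' '' X0 with hY
  have hinfA : ∀ A ∈ branchFamily X, A.Infinite := by
    rintro A ⟨x, _, rfl⟩; exact hatSet_infinite x
  have hinfB : ∀ B ∈ branchFamily Y, B.Infinite := by
    rintro B ⟨y, _, rfl⟩; exact hatSet_infinite y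
  obtain ⟨f, hfinj, G, hGinj, herr⟩ := homeo_extract hinfA hinfB h
  have hmemA : ∀ x : ↥X, hatSet x.val ∈ branchFamily X := fun x => ⟨x.val, x.2, rfl⟩
  set AX : ↥X → ↥(branchFamily X) := fun x => ⟨hatSet x.val, hmemA x⟩ with hAX
  have hAXinj : Function.Injective AX := by
    intro a b hab
    have : hatSet a.val = hatSet b.val := congrArg Subtype.val hab
    exact Subtype.ext (hatSet_injective this)
  have hFYex : ∀ x : ↥X, ∃ y, y ∈ Y ∧ hatSet y = (G (AX x)).val := by
    intro x
    obtain ⟨y, hy, he⟩ := (G (AX x)).2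
    exact ⟨y, hy, he⟩
  choose FY hFYmem hFYhat using hFYex
  have hFYinj : Function.Injective FY := by
    intro a b hab
    apply hAXinj
    apply hGinj
    apply Subtype.ext
    rw [← hFYhat a, ← hFYhat b, hab]
  have hFYne : ∀ a b : ↥X, a ≠ b → FY a ≠ FY b := fun a b hab hc => hab (hFYinj hc)
  have err1 : ∀ x : ↥X, (f '' hatSet x.val \ hatSet (FY x)).Finite := by
    intro x; rw [hFYhat]; exact (herr (AX x)).1
  have err2 : ∀ x : ↥X, (hatSet (FY x) \ f '' hatSet x.val).Finite := by
    intro x; rw [hFYhat]; exact (herr (AX x)).2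
  set ec : ↥X → ℕ := fun x =>
    (f '' hatSet x.val \ hatSet (FY x)).ncard + (hatSet (FY x) \ f '' hatSet x.val).ncard with hec
  have hXunc : ¬ Countable ↥X := by
    rw [Set.countable_coe_iff]; exact not_countable_image hunc w
  obtain ⟨n, hn⟩ : ∃ n, ¬ ({x : ↥X | ec x = n}).Countable := by
    by_contra hall
    push_neg at hall
    apply hXunc
    rw [← Set.countable_univ_iff]
    have huniv : (Set.univ : Set ↥X) = ⋃ n, {x : ↥X | ec x = n} := by
      ext x; simp
    rw [huniv]
    exact Set.countable_iUnion hall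
  have hSinf : ({x : ↥X | ec x = n}).Infinite := fun hc => hn hc.countable
  have hSVinf : (Subtype.val '' {x : ↥X | ec x = n}).Infinite :=
    hSinf.image (Set.injOn_of_injective Subtype.val_injective)
  have hT := infinite_splitvals hSVinf
  apply hT
  have hBadFin : (⋃ t ∈ Finset.range (4 * n + 1),
      (lev w) '' {j | ∃ m', lev w j + t = lev w' m' + 2 * n}).Finite := by
    apply Set.Finite.biUnion (Finset.finite_toSet _)
    intro t _
    exact (key_finite hne t (2 * n)).image _
  apply hBadFin.subset
  intro s hs
  obtain ⟨x, hxS, x', hx'S, hxx, rfl⟩ := hs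
  obtain ⟨a, ha, rfl⟩ := hxS
  obtain ⟨b, hb, rfl⟩ := hx'S
  have hab : a ≠ b := fun hc => hxx (by rw [hc])
  have hyne : FY a ≠ FY b := hFYne _ _ hab
  have hea : ec a = n := ha
  have heb : ec b = n := hb
  simp only [hec] at hea heb
  have hb1 : (f '' hatSet a.val \ hatSet (FY a)).ncard ≤ n := by omega
  have hb2 : (hatSet (FY a) \ f '' hatSet a.val).ncard ≤ n := by omega
  have hb1' : (f '' hatSet b.val \ hatSet (FY b)).ncard ≤ n := by omega
  have hb2' : (hatSet (FY b) \ f '' hatSet b.val).ncard ≤ n := by omega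
  obtain ⟨hle1, hle2⟩ := spl_close hfinj hxx hyne
    (err1 a) hb1 (err2 a) hb2 (err1 b) hb1' (err2 b) hb2'
  obtain ⟨j, hj⟩ := spl_in_range w a.2 b.2 hxx
  obtain ⟨m', hm'⟩ := spl_in_range w' (hFYmem a) (hFYmem b) hyne
  rw [hj] at hle1 hle2 ⊢
  rw [hm'] at hle1 hle2
  have ht4 : lev w' m' + 2 * n - lev w j < 4 * n + 1 := by omega
  refine Set.mem_biUnion (Finset.mem_range.2 ht4) ⟨j, ⟨m', by omega⟩, rfl⟩

lemma Phi_inj {X0 : Set (ℕ → Bool)} (hunc : ¬ X0.Countable) :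
    Function.Injective (fun w : ℕ → Bool => emb w '' X0) := by
  intro w w' he
  by_contra hww
  simp only at he
  have hXinf : (emb w '' X0).Infinite := fun hfin => not_countable_image hunc w hfin.countable
  have hT := infinite_splitvals hXinf
  apply hT
  apply ((key_finite hww 0 0).image (lev w)).subset
  intro s hs
  obtain ⟨x, hx, x', hx', hne2, rfl⟩ := hs
  obtain ⟨j, hj⟩ := spl_in_range w hx hx' hne2
  obtain ⟨m, hm⟩ := spl_in_range w' (he ▸ hx) (he ▸ hx') hne2
  exact ⟨j, ⟨m, by omega⟩, hj.symm⟩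

end PsiAux

/-- Theorem 14: for every uncountable κ ≤ 𝔠 with cf(κ) > ω there are 𝔠 many
pairwise distinct subsets of 2^ω of size κ, pairwise homeomorphic as subspaces
of 2^ω, whose Ψ-spaces Ψ(𝒜_X) are pairwise non-homeomorphic. -/
theorem exists_continuum_homeomorphic_sets_nonhomeomorphic_psi
    (κ : Cardinal) (hκ : Cardinal.aleph0 < κ) (hκc : κ ≤ Cardinal.continuum)
    (hcf : Cardinal.aleph0 < κ.ord.cof) :
    ∃ 𝒳 : Set (Set (ℕ → Bool)),
      Cardinal.mk ↥𝒳 = Cardinal.continuum ∧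
      (∀ X ∈ 𝒳, Cardinal.mk ↥X = κ) ∧
      (∀ X ∈ 𝒳, ∀ Y ∈ 𝒳, Nonempty (↥X ≃ₜ ↥Y)) ∧
      (∀ X ∈ 𝒳, ∀ Y ∈ 𝒳, X ≠ Y →
        ¬ Nonempty (@Homeomorph ((List Bool) ⊕ ↥(branchFamily X))
            ((List Bool) ⊕ ↥(branchFamily Y))
            (psiTop (branchFamily X)) (psiTop (branchFamily Y)))) := by
  classical
  obtain ⟨X0, hX0⟩ : ∃ X0 : Set (ℕ → Bool), Cardinal.mk ↥X0 = κ := by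
    apply Cardinal.le_mk_iff_exists_set.1
    rw [PsiAux.mk_nat_bool]
    exact hκc
  have hunc : ¬ X0.Countable := by
    intro hc
    have h1 : Countable ↥X0 := Set.countable_coe_iff.2 hc
    have h2 : Cardinal.mk ↥X0 ≤ Cardinal.aleph0 := Cardinal.mk_le_aleph0
    rw [hX0] at h2
    exact absurd h2 (not_le.2 hκ)
  refine ⟨Set.range (fun w : ℕ → Bool => PsiAux.emb w '' X0), ?_, ?_, ?_, ?_⟩
  · rw [Cardinal.mk_range_eq _ (PsiAux.Phi_inj hunc), PsiAux.mk_nat_bool]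
  · rintro X ⟨w, rfl⟩
    rw [Cardinal.mk_image_eq (PsiAux.emb_injective w), hX0]
  · rintro X ⟨w, rfl⟩ Y ⟨w', rfl⟩
    exact ⟨(PsiAux.imageHomeo (PsiAux.emb_continuous w) (PsiAux.emb_injective w) X0).symm.trans
      (PsiAux.imageHomeo (PsiAux.emb_continuous w') (PsiAux.emb_injective w') X0)⟩
  · rintro X ⟨w, rfl⟩ Y ⟨w', rfl⟩ hXY
    have hww : w ≠ w' := fun hc => hXY (by rw [hc])
    exact PsiAux.psi_not_homeo hunc hww
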